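/- Under the same assumptions, the population R² equals σ_{y,ŷ}/σ_y², and it decomposes as R² = φ_0 + ∑_j φ_j with benchmark φ_0 = −σ_{y,ŷ}/σ_y² and XPER values φ_j = 2β̂_j σ_{y,x_j}/σ_y². -/

import Mathlib

open MeasureTheory Finset Nat

noncomputable def cov {Ω : Type*} [MeasurableSpace Ω] (μ : Measure Ω) (f g : Ω → ℝ) : ℝ :=
  ∫ ω, (f ω - ∫ ω', f ω' ∂μ) * (g ω - ∫ ω', g ω' ∂μ) ∂μ

noncomputable def var {Ω : Type*} [MeasurableSpace Ω] (μ : Measure Ω) (f : Ω → ℝ) : ℝ :=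
  cov μ f f

/-- For a linear regression `ŷ = ∑_j β̂_j x_j` with mean-zero mutually uncorrelated features,
`E(y) = 0`, and residual uncorrelated with every feature: the population `R²` equals
`σ_{y,ŷ}/σ_y²`, the independence benchmark `φ₀` (expectation over the product of the
marginal laws of `y` and `x`) equals `−σ_{y,ŷ}/σ_y²`, and the `R²` decomposes as
`R² = φ₀ + ∑_j φ_j` with `φ_j = 2 β̂_j σ_{y,x_j}/σ_y²`. -/
theorem R2_efficiency_decomposition {Ω : Type*} [MeasurableSpace Ω] (μ : Measure Ω)
    [IsProbabilityMeasure μ] (q : ℕ) (y : Ω → ℝ) (x : Fin q → Ω → ℝ) (β : Fin q → ℝ)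
    (hy : MemLp y 2 μ) (hx : ∀ k, MemLp (x k) 2 μ)
    (hmy : (∫ ω, y ω ∂μ) = 0) (hmx : ∀ k, (∫ ω, x k ω ∂μ) = 0)
    (huncorr : ∀ k l, k ≠ l → cov μ (x k) (x l) = 0)
    (hres : ∀ k, cov μ (fun ω => y ω - ∑ l, β l * x l ω) (x k) = 0)
    (hvar : var μ y ≠ 0) :
    (∫ ω, (1 - (y ω - ∑ l, β l * x l ω) ^ 2 / var μ y) ∂μ)
        = cov μ y (fun ω => ∑ l, β l * x l ω) / var μ y
      ∧ (∫ p : Ω × Ω, (1 - (y p.1 - ∑ l, β l * x l p.2) ^ 2 / var μ y) ∂(μ.prod μ))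
        = -(cov μ y (fun ω => ∑ l, β l * x l ω)) / var μ y
      ∧ (∫ ω, (1 - (y ω - ∑ l, β l * x l ω) ^ 2 / var μ y) ∂μ)
        = (∫ p : Ω × Ω, (1 - (y p.1 - ∑ l, β l * x l p.2) ^ 2 / var μ y) ∂(μ.prod μ))
          + ∑ j, 2 * β j * cov μ y (x j) / var μ y := by
  classical
  set f : Ω → ℝ := fun ω => ∑ l, β l * x l ω with hf_def
  -- basic L² facts
  have hf2 : MemLp f 2 μ := by
    have h := memLp_finset_sum' (μ := μ) (p := 2) Finset.univ
      (fun l (_ : l ∈ Finset.univ) => (hx l).const_mul (β l))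
    have heq : (∑ l : Fin q, fun ω => β l * x l ω) = f := by
      funext ω; simp [hf_def]
    rwa [heq] at h
  have hmul : ∀ g h : Ω → ℝ, MemLp g 2 μ → MemLp h 2 μ →
      Integrable (fun ω => g ω * h ω) μ := by
    intro g h hg hh
    have hint := (((hg.add hh).integrable_sq.sub hg.integrable_sq).sub hh.integrable_sq).div_const 2
    have : (fun ω => g ω * h ω)
        = fun ω => (((g ω + h ω) ^ 2 - g ω ^ 2) - h ω ^ 2) / 2 := by ext ω; ring
    rw [this]; exact hint
  have hy1 : Integrable y μ := hy.integrable one_le_two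
  have hx1 : ∀ k, Integrable (x k) μ := fun k => (hx k).integrable one_le_two
  have hf1 : Integrable f μ := hf2.integrable one_le_two
  have hmf : (∫ ω, f ω ∂μ) = 0 := by
    rw [hf_def, integral_finset_sum _ fun l _ => (hx1 l).const_mul (β l)]
    simp [integral_const_mul, hmx]
  -- cov with zero means is just ∫ g*h
  have hcov : ∀ g h : Ω → ℝ, (∫ ω, g ω ∂μ) = 0 → (∫ ω, h ω ∂μ) = 0 →
      cov μ g h = ∫ ω, g ω * h ω ∂μ := by
    intro g h hg hh; simp [cov, hg, hh]
  have hxx : ∀ k l, k ≠ l → (∫ ω, x k ω * x l ω ∂μ) = 0 := fun k l hkl => by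
    rw [← hcov _ _ (hmx k) (hmx l)]; exact huncorr k l hkl
  -- residual orthogonality: ∫ (y - f) * x_k = 0
  have hresm : (∫ ω, (y ω - f ω) ∂μ) = 0 := by
    rw [integral_sub hy1 hf1, hmy, hmf]; ring
  have hres' : ∀ k, (∫ ω, (y ω - f ω) * x k ω ∂μ) = 0 := fun k => by
    rw [← hcov _ _ hresm (hmx k)]; exact hres k
  have hyx_fx : ∀ k, (∫ ω, y ω * x k ω ∂μ) = ∫ ω, f ω * x k ω ∂μ := by
    intro k
    have h := hres' k
    rw [show (fun ω => (y ω - f ω) * x k ω)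
        = fun ω => y ω * x k ω - f ω * x k ω from by ext ω; ring,
      integral_sub (hmul _ _ hy (hx k)) (hmul _ _ hf2 (hx k))] at h
    linarith
  -- ∫ f * x_k = β k * ∫ x_k²  and  C := ∫ y f = ∫ f f
  have hfx : ∀ k, (∫ ω, f ω * x k ω ∂μ) = β k * ∫ ω, x k ω ^ 2 ∂μ := by
    intro k
    have : (fun ω => f ω * x k ω) = fun ω => ∑ l, β l * (x l ω * x k ω) := by
      ext ω; rw [hf_def, Finset.sum_mul]
      exact Finset.sum_congr rfl fun l _ => by ring
    rw [this, integral_finset_sum _ fun l _ => ((hmul _ _ (hx l) (hx k)).const_mul (β l))]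
    rw [Finset.sum_eq_single k]
    · simp [integral_const_mul, sq]
    · intro l _ hlk
      rw [integral_const_mul, hxx l k hlk, mul_zero]
    · simp
  set C : ℝ := ∫ ω, y ω * f ω ∂μ with hC_def
  have hff : (∫ ω, f ω * f ω ∂μ) = C := by
    have h1 : (fun ω => f ω * f ω) = fun ω => ∑ l, β l * (f ω * x l ω) := by
      ext ω; conv_lhs => rw [hf_def]
      rw [Finset.sum_mul]; congr 1; ext l; ring
    have h2 : (fun ω => y ω * f ω) = fun ω => ∑ l, β l * (y ω * x l ω) := by
      ext ω; rw [hf_def, Finset.mul_sum]; congr 1; ext l; ring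
    rw [h1, hC_def, h2,
      integral_finset_sum _ fun l _ => ((hmul _ _ hf2 (hx l)).const_mul (β l)),
      integral_finset_sum _ fun l _ => ((hmul _ _ hy (hx l)).const_mul (β l))]
    refine Finset.sum_congr rfl fun l _ => ?_
    rw [integral_const_mul, integral_const_mul, hyx_fx l]
  set S : ℝ := var μ y with hS_def
  have hS : S = ∫ ω, y ω ^ 2 ∂μ := by
    rw [hS_def, var, hcov _ _ hmy hmy]; simp [sq]
  have hCcov : cov μ y f = C := by rw [hcov _ _ hmy hmf]
  have hff2 : (∫ ω, f ω ^ 2 ∂μ) = C := by simpa [sq] using hff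
  -- ∫ (y - f)² = S - C
  have hyf : (∫ ω, (y ω - f ω) ^ 2 ∂μ) = S - C := by
    have e0 : (fun ω => (y ω - f ω) ^ 2)
        = fun ω => y ω ^ 2 - 2 * (y ω * f ω) + f ω ^ 2 := by funext ω; ring
    have e1 := integral_add (μ := μ) ((hy.integrable_sq).sub ((hmul _ _ hy hf2).const_mul 2))
        hf2.integrable_sq
    have e2 := integral_sub (μ := μ) hy.integrable_sq ((hmul _ _ hy hf2).const_mul 2)
    simp only [Pi.sub_apply] at e1 e2
    have e3 : (∫ ω, 2 * (y ω * f ω) ∂μ) = 2 * C := by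
      rw [integral_const_mul, ← hC_def]
    rw [e0, e1, e2, e3, ← hS, hff2]; ring
  -- part 1
  have part1 : (∫ ω, (1 - (y ω - f ω) ^ 2 / S) ∂μ) = C / S := by
    have e := integral_sub (μ := μ) (integrable_const (1 : ℝ))
      (((hy.sub hf2).integrable_sq).div_const S)
    simp only [Pi.sub_apply] at e
    rw [e, integral_div, hyf]
    simp only [integral_const, measure_univ, probReal_univ, ENNReal.toReal_one, smul_eq_mul, one_mul]
    field_simp
    ring
  -- product integral computation
  have hprod : (∫ p : Ω × Ω, (y p.1 - f p.2) ^ 2 ∂(μ.prod μ)) = S + C := by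
    have hexp : (fun p : Ω × Ω => (y p.1 - f p.2) ^ 2)
        = fun p => (fun ω => y ω ^ 2) p.1 * (fun _ => (1 : ℝ)) p.2
          - 2 * (y p.1 * f p.2) + (fun _ => (1 : ℝ)) p.1 * (fun ω => f ω ^ 2) p.2 := by
      ext p; ring
    have i1 : Integrable (fun p : Ω × Ω =>
        (fun ω => y ω ^ 2) p.1 * (fun _ => (1 : ℝ)) p.2) (μ.prod μ) :=
      hy.integrable_sq.mul_prod (integrable_const 1)
    have i2 : Integrable (fun p : Ω × Ω => y p.1 * f p.2) (μ.prod μ) :=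
      hy1.mul_prod hf1
    have i3 : Integrable (fun p : Ω × Ω =>
        (fun _ => (1 : ℝ)) p.1 * (fun ω => f ω ^ 2) p.2) (μ.prod μ) :=
      (integrable_const 1).mul_prod hf2.integrable_sq
    have e1 := integral_add (μ := μ.prod μ) (i1.sub (i2.const_mul 2)) i3
    have e2 := integral_sub (μ := μ.prod μ) i1 (i2.const_mul 2)
    simp only [Pi.sub_apply] at e1 e2
    rw [hexp, e1, e2, integral_const_mul,
      integral_prod_mul (fun ω => y ω ^ 2) (fun _ => (1 : ℝ)),
      integral_prod_mul y f,
      integral_prod_mul (fun _ => (1 : ℝ)) (fun ω => f ω ^ 2)]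
    simp only [integral_const, measure_univ, probReal_univ, ENNReal.toReal_one, smul_eq_mul, one_mul, mul_one]
    rw [hmy, ← hS, hff2]
    ring
  have part2 : (∫ p : Ω × Ω, (1 - (y p.1 - f p.2) ^ 2 / S) ∂(μ.prod μ)) = -C / S := by
    have hintp : Integrable (fun p : Ω × Ω => (y p.1 - f p.2) ^ 2) (μ.prod μ) := by
      have hexp : (fun p : Ω × Ω => (y p.1 - f p.2) ^ 2)
          = fun p => (fun ω => y ω ^ 2) p.1 * (fun _ => (1 : ℝ)) p.2
            - 2 * (y p.1 * f p.2) + (fun _ => (1 : ℝ)) p.1 * (fun ω => f ω ^ 2) p.2 := by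
        ext p; ring
      rw [hexp]
      exact ((hy.integrable_sq.mul_prod (integrable_const 1)).sub
        ((hy1.mul_prod hf1).const_mul 2)).add ((integrable_const 1).mul_prod hf2.integrable_sq)
    have e := integral_sub (μ := μ.prod μ) (integrable_const (1 : ℝ)) (hintp.div_const S)
    rw [e, integral_div, hprod]
    simp only [integral_const, measure_univ, probReal_univ, ENNReal.toReal_one, smul_eq_mul, one_mul]
    field_simp
    ring
  -- cov μ y (x j) = ∫ y x_j, and C = ∑ β_j ∫ y x_j
  have hCyx : C = ∑ j, β j * cov μ y (x j) := by
    have h2 : (fun ω => y ω * f ω) = fun ω => ∑ l, β l * (y ω * x l ω) := by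
      ext ω; rw [hf_def, Finset.mul_sum]; congr 1; ext l; ring
    rw [hC_def, h2, integral_finset_sum _ fun l _ => ((hmul _ _ hy (hx l)).const_mul (β l))]
    refine Finset.sum_congr rfl fun j _ => ?_
    rw [integral_const_mul, hcov _ _ hmy (hmx j)]
  refine ⟨by rw [hCcov]; exact part1, by rw [hCcov]; exact part2, ?_⟩
  rw [part1, part2]
  have : ∑ j, 2 * β j * cov μ y (x j) / S = 2 * C / S := by
    rw [hCyx, Finset.mul_sum, Finset.sum_div, Finset.sum_congr rfl]
    intro j _; ring
  rw [this]
  field_simp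
  ring
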